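/- Let f : {0,1}^n → {0,1}^n be an AND-NOT network with wiring diagram W, and suppose J ⊆ {1,…,n} intersects every strong positive feedback loop of W. Then the projection x ↦ x|_J (restriction of x to the coordinates in J) is injective on the set of steady states of f; that is, any two distinct steady states a ≠ b of f satisfy a_i ≠ b_i for some i ∈ J. -/
import Mathlib

/-- The AND-NOT network determined by its wiring diagram: node `i` has positive
regulators `P i` and negative regulators `N i`, and coordinate function
`f_i(x) = ⋀_{j∈P i} x j ∧ ⋀_{j∈N i} ¬ x j`. -/
def andNotNet {n : ℕ} (P N : Fin n → Finset (Fin n)) :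
    (Fin n → Bool) → Fin n → Bool :=
  fun x i => decide ((∀ j ∈ P i, x j = true) ∧ (∀ j ∈ N i, x j = false))

/-- The data of a directed cycle through distinct vertices of a signed directed graph
on vertices `Fin n`: a list of distinct vertices `vert 0, …, vert len` together with a
sign (`true` = positive) for each edge `vert i → vert (i+1)` (indices mod `len+1`). -/
structure CycleData (n : ℕ) where
  len : ℕ
  vert : Fin (len + 1) → Fin n
  inj : Function.Injective vert
  sign : Fin (len + 1) → Bool

/-- Membership of a vertex in a cycle. -/
def CycleData.Mem {n : ℕ} (C : CycleData n) (v : Fin n) : Prop :=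
  ∃ i, C.vert i = v

/-- `(a, b, s)` is an edge of the cycle `C`. -/
def CycleData.EdgeOf {n : ℕ} (C : CycleData n) (a b : Fin n) (s : Bool) : Prop :=
  ∃ i, C.vert i = a ∧ C.vert (i + 1) = b ∧ C.sign i = s

/-- `C` is a feedback loop of the signed graph with positive edge relation `pos`
and negative edge relation `neg` (an edge `(j,i,+)` is `pos j i`). -/
def CycleData.IsLoopOf {n : ℕ} (C : CycleData n)
    (pos neg : Fin n → Fin n → Prop) : Prop :=
  ∀ i, if C.sign i then pos (C.vert i) (C.vert (i + 1))
       else neg (C.vert i) (C.vert (i + 1))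

/-- A feedback loop is positive when the product of its signs is positive, i.e. it has
an even number of negative edges. -/
def CycleData.IsPositive {n : ℕ} (C : CycleData n) : Prop :=
  (Finset.univ.filter fun i => C.sign i = false).card % 2 = 0

/-- A feedback loop `C` is strong when no vertex `k` sends, via a positive edge `k→i`
and a negative edge `k⊸j` not belonging to `C`, edges into vertices `i, j ∈ C`. -/
def CycleData.IsStrong {n : ℕ} (C : CycleData n)
    (pos neg : Fin n → Fin n → Prop) : Prop :=
  ¬ ∃ k i j, C.Mem i ∧ C.Mem j ∧ pos k i ∧ neg k j ∧
      ¬ C.EdgeOf k i true ∧ ¬ C.EdgeOf k j false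

namespace AndNotAux

variable {n : ℕ}

/-- vertex with at least two distinct in-edges in `E` -/
def Multi (E : Finset (Fin n × Fin n)) (x : Fin n) : Prop :=
  ∃ u u', (u, x) ∈ E ∧ (u', x) ∈ E ∧ u ≠ u'

lemma not_multi_eq {E : Finset (Fin n × Fin n)} {x u u' : Fin n}
    (h : ¬ Multi E x) (h1 : (u, x) ∈ E) (h2 : (u', x) ∈ E) : u = u' := by
  by_contra hne
  exact h ⟨u, u', h1, h2, hne⟩

/-- no-fork property of a cycle w.r.t. edge set `E` and coloring `σ` -/
def NoFork (σ : Fin n → Bool) (E : Finset (Fin n × Fin n)) {m : ℕ}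
    (v : Fin (m + 1) → Fin n) : Prop :=
  ∀ k : Fin n, ∀ ti tj : Fin (m + 1),
    (k, v ti) ∈ E → σ k = σ (v ti) → (∀ t, ¬ (v t = k ∧ v (t + 1) = v ti)) →
    (k, v tj) ∈ E → σ k ≠ σ (v tj) → (∀ t, ¬ (v t = k ∧ v (t + 1) = v tj)) → False

lemma iter_mem {f : Fin n → Fin n} {V : Finset (Fin n)}
    (hf : ∀ x ∈ V, f x ∈ V) {x : Fin n} (hx : x ∈ V) : ∀ k, f^[k] x ∈ V := by
  intro k
  induction k with
  | zero => simpa using hx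
  | succ k ih => rw [Function.iterate_succ_apply']; exact hf _ ih

/-- a function mapping a set into itself has a periodic cycle inside it -/
lemma cycle_of_fun (f : Fin n → Fin n) (V : Finset (Fin n)) (hVne : V.Nonempty)
    (hf : ∀ x ∈ V, f x ∈ V) :
    ∃ (m : ℕ) (v : Fin (m + 1) → Fin n), Function.Injective v ∧ (∀ t, v t ∈ V) ∧
      ∀ t, v (t + 1) = f (v t) := by
  obtain ⟨x₀, hx₀⟩ := hVne
  -- find s < t with equal iterates
  obtain ⟨s', t', hne, heq⟩ :=
    Finite.exists_ne_map_eq_of_infinite (fun k : ℕ => f^[k] x₀)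
  have key : ∀ s t : ℕ, s < t → f^[s] x₀ = f^[t] x₀ →
      ∃ (m : ℕ) (v : Fin (m + 1) → Fin n), Function.Injective v ∧ (∀ t, v t ∈ V) ∧
        ∀ t, v (t + 1) = f (v t) := by
    intro s t hst heq
    set y := f^[s] x₀ with hy
    have hyV : y ∈ V := iter_mem hf hx₀ s
    have hper : f^[t - s] y = y := by
      have : f^[t - s] (f^[s] x₀) = f^[(t - s) + s] x₀ := by
        rw [Function.iterate_add_apply]
      rw [hy, this, Nat.sub_add_cancel hst.le, ← heq]
    have hex : ∃ q, 0 < q ∧ f^[q] y = y := ⟨t - s, Nat.sub_pos_of_lt hst, hper⟩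
    classical
    obtain ⟨hp0, hpy⟩ := Nat.find_spec hex
    obtain ⟨m, hm⟩ : ∃ m, Nat.find hex = m + 1 :=
      ⟨Nat.find hex - 1, (Nat.succ_pred_eq_of_pos hp0).symm⟩
    refine ⟨m, fun t => f^[t.1] y, ?_, fun t => iter_mem hf hyV t.1, ?_⟩
    · -- injectivity
      have aux : ∀ a b : Fin (m + 1), a.1 < b.1 → f^[a.1] y = f^[b.1] y → False := by
        intro a b hab habeq
        have hble : b.1 < Nat.find hex := by rw [hm]; exact b.isLt
        have h1 : f^[(Nat.find hex - b.1) + a.1] y = y := by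
          rw [Function.iterate_add_apply, habeq, ← Function.iterate_add_apply,
            Nat.sub_add_cancel hble.le, hpy]
        have h2 : (Nat.find hex - b.1) + a.1 < Nat.find hex := by omega
        exact Nat.find_min hex h2 ⟨by omega, h1⟩
      intro a b hab
      by_contra hne2
      rcases Nat.lt_or_ge a.1 b.1 with h | h
      · exact aux a b h hab
      · have hba : b.1 < a.1 := lt_of_le_of_ne h (fun hh => hne2 (Fin.ext hh.symm))
        exact aux b a hba hab.symm
    · -- step
      intro u
      rcases eq_or_ne u (Fin.last m) with rfl | hlt
      · have h1 : Fin.last m + 1 = 0 := by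
          simp [Fin.ext_iff, Fin.last, Fin.add_def]
        rw [h1]
        show f^[(0 : Fin (m+1)).1] y = f (f^[(Fin.last m).1] y)
        rw [← Function.iterate_succ_apply' f]
        show y = f^[m + 1] y
        rw [← hm, hpy]
      · have hum : u.1 < m := by
          have h2 := u.isLt
          rcases Nat.lt_or_ge u.1 m with h | h
          · exact h
          · have hu : u = Fin.last m :=
              Fin.ext (by simpa using Nat.le_antisymm (Nat.le_of_lt_succ h2) h)
            exact absurd hu hlt
        have h1 : (u + 1).1 = u.1 + 1 := by
          simp [Fin.add_def, Nat.mod_eq_of_lt, Nat.succ_lt_succ hum]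
        show f^[(u + 1).1] y = f (f^[u.1] y)
        rw [h1, Function.iterate_succ_apply']
  rcases hne.lt_or_gt with h | h
  · exact key s' t' h heq
  · exact key t' s' h heq.symm



/-- Key graph lemma: a 2-colored digraph in which every vertex of `V` has an
in-edge contains a cycle with no fork. -/
lemma exists_cycle (σ : Fin n → Bool) (bound : ℕ) :
    ∀ (V : Finset (Fin n)) (E : Finset (Fin n × Fin n)), E.card ≤ bound →
    (∀ e ∈ E, e.1 ∈ V ∧ e.2 ∈ V) → (∀ w ∈ V, ∃ u, (u, w) ∈ E) → V.Nonempty →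
    ∃ (m : ℕ) (v : Fin (m + 1) → Fin n), Function.Injective v ∧ (∀ t, v t ∈ V) ∧
      (∀ t, (v t, v (t + 1)) ∈ E) ∧ NoFork σ E v := by
  induction bound with
  | zero =>
      intro V E hcard hEV hin hVne
      obtain ⟨x, hx⟩ := hVne
      obtain ⟨u, hu⟩ := hin x hx
      rw [Nat.le_zero, Finset.card_eq_zero] at hcard
      rw [hcard] at hu
      exact absurd hu (Finset.notMem_empty _)
  | succ B ih =>
      intro V E hcard hEV hin hVne
      classical
      by_cases hout : ∃ x ∈ V, ∀ w, (x, w) ∉ E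
      · -- case (a): remove an out-degree-0 vertex
        obtain ⟨x, hxV, hx⟩ := hout
        set V' := V.erase x with hV'
        set E' := E.filter (fun e => e.2 ≠ x) with hE'
        obtain ⟨u, hu⟩ := hin x hxV
        have hE'ss : E' ⊂ E := by
          refine (Finset.ssubset_iff_of_subset (Finset.filter_subset _ _)).mpr ?_
          exact ⟨(u, x), hu, by simp [hE']⟩
        have hcard' : E'.card ≤ B := by
          have := Finset.card_lt_card hE'ss
          omega
        have hEV' : ∀ e ∈ E', e.1 ∈ V' ∧ e.2 ∈ V' := by
          intro e he
          rw [hE', Finset.mem_filter] at he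
          obtain ⟨heE, hne2⟩ := he
          obtain ⟨h1, h2⟩ := hEV e heE
          constructor
          · refine Finset.mem_erase.mpr ⟨?_, h1⟩
            intro h
            exact hx e.2 (by rw [← h]; exact heE)
          · exact Finset.mem_erase.mpr ⟨hne2, h2⟩
        have hin' : ∀ w ∈ V', ∃ u, (u, w) ∈ E' := by
          intro w hw
          obtain ⟨hwne, hwV⟩ := Finset.mem_erase.mp hw
          obtain ⟨u', hu'⟩ := hin w hwV
          exact ⟨u', by rw [hE', Finset.mem_filter]; exact ⟨hu', hwne⟩⟩
        have hV'ne : V'.Nonempty := by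
          refine ⟨u, Finset.mem_erase.mpr ⟨?_, (hEV _ hu).1⟩⟩
          intro h
          exact hx x (by rwa [h] at hu)
        obtain ⟨m, v, hinj, hmem, hedge, hnf⟩ := ih V' E' hcard' hEV' hin' hV'ne
        refine ⟨m, v, hinj, fun t => Finset.mem_of_mem_erase (hmem t),
          fun t => Finset.mem_of_mem_filter _ (hedge t), ?_⟩
        intro k ti tj h1 h2 h3 h4 h5 h6
        have h1' : (k, v ti) ∈ E' := by
          rw [hE', Finset.mem_filter]
          exact ⟨h1, (Finset.mem_erase.mp (hmem ti)).1⟩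
        have h4' : (k, v tj) ∈ E' := by
          rw [hE', Finset.mem_filter]
          exact ⟨h4, (Finset.mem_erase.mp (hmem tj)).1⟩
        exact hnf k ti tj h1' h2 h3 h4' h5 h6
      · push_neg at hout
        by_cases hsafe : ∃ p w, (p, w) ∈ E ∧ Multi E w ∧
            ∀ w', (p, w') ∈ E → σ w' ≠ σ w → ¬ Multi E w'
        · -- case (b): delete a safe edge
          obtain ⟨p, w, hpw, hMw, hsafety⟩ := hsafe
          set E' := E.erase (p, w) with hE'
          have hcard' : E'.card ≤ B := by
            have hpos : 0 < E.card := Finset.card_pos.mpr ⟨_, hpw⟩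
            rw [hE', Finset.card_erase_of_mem hpw]
            omega
          have hsub : E' ⊆ E := Finset.erase_subset _ _
          have hEV' : ∀ e ∈ E', e.1 ∈ V ∧ e.2 ∈ V := fun e he => hEV e (hsub he)
          have hin' : ∀ z ∈ V, ∃ u, (u, z) ∈ E' := by
            intro z hz
            obtain ⟨u, hu⟩ := hin z hz
            by_cases h : (u, z) = (p, w)
            · obtain ⟨u₁, u₂, h₁, h₂, hne⟩ := hMw
              rw [Prod.mk.injEq] at h
              have hz' : z = w := h.2
              subst hz'
              by_cases hu₁ : u₁ = p
              · refine ⟨u₂, Finset.mem_erase.mpr ⟨?_, h₂⟩⟩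
                intro hc
                rw [Prod.mk.injEq] at hc
                exact hne (by rw [hu₁, hc.1])
              · refine ⟨u₁, Finset.mem_erase.mpr ⟨?_, h₁⟩⟩
                intro hc
                rw [Prod.mk.injEq] at hc
                exact hu₁ hc.1
            · exact ⟨u, Finset.mem_erase.mpr ⟨h, hu⟩⟩
          obtain ⟨m, v, hinj, hmem, hedge, hnf⟩ := ih V E' hcard' hEV' hin' hVne
          refine ⟨m, v, hinj, hmem, fun t => hsub (hedge t), ?_⟩
          intro k ti tj h1 h2 h3 h4 h5 h6
          by_cases hi : (k, v ti) = (p, w)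
          · by_cases hj : (k, v tj) = (p, w)
            · -- both halves equal the deleted edge: colors contradict
              rw [Prod.mk.injEq] at hi hj
              have : v ti = v tj := by rw [hi.2, hj.2]
              rw [this] at h2
              exact h5 h2
            · -- (k, v ti) = (p,w): then v tj has a unique in-edge
              rw [Prod.mk.injEq] at hi
              have hkp : k = p := hi.1
              have hiw : v ti = w := hi.2
              have hop : σ (v tj) ≠ σ w := by
                rw [← hiw]
                intro hc
                exact h5 (by rw [hc, ← h2])
              have hnm : ¬ Multi E (v tj) := hsafety (v tj) (by rw [← hkp]; exact h4) hop
              have hcyc : (v (tj - 1), v tj) ∈ E := by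
                have := hedge (tj - 1)
                rw [sub_add_cancel] at this
                exact hsub this
              have := not_multi_eq hnm h4 hcyc
              exact h6 (tj - 1) ⟨this.symm, by rw [sub_add_cancel]⟩
          · by_cases hj : (k, v tj) = (p, w)
            · rw [Prod.mk.injEq] at hj
              have hkp : k = p := hj.1
              have hjw : v tj = w := hj.2
              have hop : σ (v ti) ≠ σ w := by
                rw [← hjw]
                intro hc
                exact h5 (by rw [← hc, ← h2])
              have hnm : ¬ Multi E (v ti) := hsafety (v ti) (by rw [← hkp]; exact h1) hop
              have hcyc : (v (ti - 1), v ti) ∈ E := by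
                have := hedge (ti - 1)
                rw [sub_add_cancel] at this
                exact hsub this
              have := not_multi_eq hnm h1 hcyc
              exact h3 (ti - 1) ⟨this.symm, by rw [sub_add_cancel]⟩
            · exact hnf k ti tj (Finset.mem_erase.mpr ⟨hi, h1⟩) h2 h3
                (Finset.mem_erase.mpr ⟨hj, h4⟩) h5 h6
        · -- case (c): no safe edge: every vertex has an out-edge into the good set
          push_neg at hsafe
          have claim : ∀ x ∈ V, ∃ z, (x, z) ∈ E ∧ z ∈ V ∧
              (σ z = false ∨ ¬ Multi E z) := by
            intro x hx
            obtain ⟨w₀, hw₀⟩ := hout x hx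
            by_cases h0 : σ w₀ = false ∨ ¬ Multi E w₀
            · exact ⟨w₀, hw₀, (hEV _ hw₀).2, h0⟩
            · push_neg at h0
              obtain ⟨h0c, h0m⟩ := h0
              obtain ⟨w₁, hw₁, hop, _⟩ := hsafe x w₀ hw₀ h0m
              refine ⟨w₁, hw₁, (hEV _ hw₁).2, Or.inl ?_⟩
              cases hb1 : σ w₁ with
              | false => rfl
              | true =>
                  exfalso
                  have h0c' : σ w₀ = true := by revert h0c; cases σ w₀ <;> simp
                  rw [hb1, h0c'] at hop
                  exact hop rfl
          set f : Fin n → Fin n := fun x =>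
            if hx : x ∈ V then (claim x hx).choose else x with hf
          have hfE : ∀ x ∈ V, (x, f x) ∈ E := by
            intro x hx
            rw [hf]; simp only [dif_pos hx]
            exact (claim x hx).choose_spec.1
          have hfV : ∀ x ∈ V, f x ∈ V := by
            intro x hx
            rw [hf]; simp only [dif_pos hx]
            exact (claim x hx).choose_spec.2.1
          have hfH : ∀ x ∈ V, σ (f x) = false ∨ ¬ Multi E (f x) := by
            intro x hx
            rw [hf]; simp only [dif_pos hx]
            exact (claim x hx).choose_spec.2.2
          obtain ⟨m, v, hinj, hmem, hstep⟩ := cycle_of_fun f V hVne hfV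
          have hedge : ∀ t, (v t, v (t + 1)) ∈ E := by
            intro t
            rw [hstep t]
            exact hfE _ (hmem t)
          refine ⟨m, v, hinj, hmem, hedge, ?_⟩
          intro k ti tj h1 h2 h3 h4 h5 h6
          -- each cycle vertex is an image of f, hence good
          have hgood : ∀ t : Fin (m + 1), σ (v t) = false ∨ ¬ Multi E (v t) := by
            intro t
            have : v t = f (v (t - 1)) := by rw [← hstep (t - 1), sub_add_cancel]
            rw [this]
            exact hfH _ (hmem (t - 1))
          have hci : σ (v ti) = false := by
            rcases hgood ti with h | h
            · exact h
            · exfalso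
              have hcyc : (v (ti - 1), v ti) ∈ E := by
                have := hedge (ti - 1); rwa [sub_add_cancel] at this
              have := not_multi_eq h h1 hcyc
              exact h3 (ti - 1) ⟨this.symm, by rw [sub_add_cancel]⟩
          have hcj : σ (v tj) = false := by
            rcases hgood tj with h | h
            · exact h
            · exfalso
              have hcyc : (v (tj - 1), v tj) ∈ E := by
                have := hedge (tj - 1); rwa [sub_add_cancel] at this
              have := not_multi_eq h h4 hcyc
              exact h6 (tj - 1) ⟨this.symm, by rw [sub_add_cancel]⟩
          rw [hci] at h2
          rw [hcj] at h5
          exact h5 h2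

end AndNotAux


/-- If `J` intersects every strong positive feedback loop of the wiring diagram of an
AND-NOT network, then the projection onto the coordinates in `J` is injective on the
set of steady states: distinct steady states differ in some coordinate of `J`. -/
theorem andNot_steadyStates_proj_injective {n : ℕ}
    (P N : Fin n → Finset (Fin n)) (hd : ∀ i, Disjoint (P i) (N i))
    (J : Finset (Fin n))
    (hJ : ∀ C : CycleData n,
      C.IsLoopOf (fun j i => j ∈ P i) (fun j i => j ∈ N i) →
      C.IsPositive →
      C.IsStrong (fun j i => j ∈ P i) (fun j i => j ∈ N i) →
      ∃ v ∈ J, C.Mem v) :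
    ∀ a b : Fin n → Bool, andNotNet P N a = a → andNotNet P N b = b →
      (∀ i ∈ J, a i = b i) → a = b := by
  classical
  intro a b ha hb hagree
  by_contra hne
  -- the disagreement set
  have hDne : ∃ i, a i ≠ b i := by
    by_contra h
    push_neg at h
    exact hne (funext h)
  set D : Finset (Fin n) := Finset.univ.filter (fun i => a i ≠ b i) with hD
  have hmemD : ∀ i, i ∈ D ↔ a i ≠ b i := by
    intro i; rw [hD, Finset.mem_filter]; simp
  have hVne : D.Nonempty := by
    obtain ⟨i, hi⟩ := hDne
    exact ⟨i, (hmemD i).mpr hi⟩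
  -- fixed point facts
  have haT : ∀ i, a i = true → (∀ j ∈ P i, a j = true) ∧ (∀ j ∈ N i, a j = false) := by
    intro i hi
    have h := congrFun ha i
    simp only [andNotNet] at h
    rw [hi] at h
    exact of_decide_eq_true h
  have haF : ∀ i, a i = false → ¬ ((∀ j ∈ P i, a j = true) ∧ (∀ j ∈ N i, a j = false)) := by
    intro i hi
    have h := congrFun ha i
    simp only [andNotNet] at h
    rw [hi] at h
    exact of_decide_eq_false h
  have hbT : ∀ i, b i = true → (∀ j ∈ P i, b j = true) ∧ (∀ j ∈ N i, b j = false) := by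
    intro i hi
    have h := congrFun hb i
    simp only [andNotNet] at h
    rw [hi] at h
    exact of_decide_eq_true h
  have hbF : ∀ i, b i = false → ¬ ((∀ j ∈ P i, b j = true) ∧ (∀ j ∈ N i, b j = false)) := by
    intro i hi
    have h := congrFun hb i
    simp only [andNotNet] at h
    rw [hi] at h
    exact of_decide_eq_false h
  -- Boolean helpers
  have hflip : ∀ i, i ∈ D → (a i = true → b i = false) ∧ (a i = false → b i = true) := by
    intro i hi
    have h := (hmemD i).mp hi
    constructor
    · intro h1; cases hbv : b i
      · rfl
      · exact absurd (by rw [h1, hbv]) h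
    · intro h1; cases hbv : b i
      · exact absurd (by rw [h1, hbv]) h
      · rfl
  -- positive regulators: in the state where the target is on, the regulator is on
  have hPfact : ∀ k i, i ∈ D → k ∈ P i →
      (a i = true → a k = true) ∧ (a i = false → b k = true) := by
    intro k i hi hk
    constructor
    · intro h1; exact (haT i h1).1 k hk
    · intro h1; exact (hbT i ((hflip i hi).2 h1)).1 k hk
  have hNfact : ∀ k j, j ∈ D → k ∈ N j →
      (a j = true → a k = false) ∧ (a j = false → b k = false) := by
    intro k j hj hk
    constructor
    · intro h1; exact (haT j h1).2 k hk
    · intro h1; exact (hbT j ((hflip j hj).2 h1)).2 k hk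
  -- color consistency inside D
  have hPcol : ∀ k i, k ∈ D → i ∈ D → k ∈ P i → a k = a i := by
    intro k i hkD hiD hk
    cases hai : a i
    · have hb1 : b k = true := (hPfact k i hiD hk).2 hai
      cases hak : a k
      · rfl
      · exact absurd (by rw [hak, hb1]) ((hmemD k).mp hkD)
    · exact (hPfact k i hiD hk).1 hai
  have hNcol : ∀ k j, k ∈ D → j ∈ D → k ∈ N j → a k ≠ a j := by
    intro k j hkD hjD hk
    cases haj : a j
    · have hb1 : b k = false := (hNfact k j hjD hk).2 haj
      cases hak : a k
      · exact absurd (by rw [hak, hb1]) ((hmemD k).mp hkD)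
      · simp
    · rw [(hNfact k j hjD hk).1 haj]; simp
  -- forks from outside D are impossible
  have hkill : ∀ k i j, i ∈ D → j ∈ D → k ∉ D → k ∈ P i → k ∈ N j → False := by
    intro k i j hiD hjD hkD hkP hkN
    have hab : a k = b k := by
      by_contra h
      exact hkD ((hmemD k).mpr h)
    have h1 : a k = true := by
      cases hai : a i
      · rw [hab]; exact (hPfact k i hiD hkP).2 hai
      · exact (hPfact k i hiD hkP).1 hai
    have h2 : a k = false := by
      cases haj : a j
      · rw [hab]; exact (hNfact k j hjD hkN).2 haj
      · exact (hNfact k j hjD hkN).1 haj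
    rw [h1] at h2
    exact Bool.noConfusion h2
  -- the edge set of the wiring diagram restricted to D
  set E : Finset (Fin n × Fin n) := Finset.univ.filter
    (fun e => e.1 ∈ D ∧ e.2 ∈ D ∧ (e.1 ∈ P e.2 ∨ e.1 ∈ N e.2)) with hE
  have hmemE : ∀ u w : Fin n, ((u, w) ∈ E ↔ u ∈ D ∧ w ∈ D ∧ (u ∈ P w ∨ u ∈ N w)) := by
    intro u w; rw [hE, Finset.mem_filter]; simp
  have hEV : ∀ e ∈ E, e.1 ∈ D ∧ e.2 ∈ D := by
    intro e he
    rw [hE, Finset.mem_filter] at he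
    exact ⟨he.2.1, he.2.2.1⟩
  -- every vertex of D has an in-edge from D
  have hin : ∀ i ∈ D, ∃ u, (u, i) ∈ E := by
    intro i hiD
    cases hai : a i
    · -- a i = false, b i = true : use that f_i(a) = 0
      have hnall := haF i hai
      by_cases hP : ∀ j ∈ P i, a j = true
      · have hNex : ¬ ∀ j ∈ N i, a j = false := fun h => hnall ⟨hP, h⟩
        push_neg at hNex
        obtain ⟨j, hjN, hja⟩ := hNex
        have hja' : a j = true := by revert hja; cases a j <;> simp
        have hjb : b j = false := (hbT i ((hflip i hiD).2 hai)).2 j hjN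
        have hjD : j ∈ D := (hmemD j).mpr (by rw [hja', hjb]; simp)
        exact ⟨j, (hmemE j i).mpr ⟨hjD, hiD, Or.inr hjN⟩⟩
      · push_neg at hP
        obtain ⟨j, hjP, hja⟩ := hP
        have hja' : a j = false := by revert hja; cases a j <;> simp
        have hjb : b j = true := (hbT i ((hflip i hiD).2 hai)).1 j hjP
        have hjD : j ∈ D := (hmemD j).mpr (by rw [hja', hjb]; simp)
        exact ⟨j, (hmemE j i).mpr ⟨hjD, hiD, Or.inl hjP⟩⟩
    · -- a i = true, b i = false : use that f_i(b) = 0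
      have hbi : b i = false := (hflip i hiD).1 hai
      have hnall := hbF i hbi
      by_cases hP : ∀ j ∈ P i, b j = true
      · have hNex : ¬ ∀ j ∈ N i, b j = false := fun h => hnall ⟨hP, h⟩
        push_neg at hNex
        obtain ⟨j, hjN, hjb⟩ := hNex
        have hjb' : b j = true := by revert hjb; cases b j <;> simp
        have hja : a j = false := (haT i hai).2 j hjN
        have hjD : j ∈ D := (hmemD j).mpr (by rw [hja, hjb']; simp)
        exact ⟨j, (hmemE j i).mpr ⟨hjD, hiD, Or.inr hjN⟩⟩
      · push_neg at hP
        obtain ⟨j, hjP, hjb⟩ := hP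
        have hjb' : b j = false := by revert hjb; cases b j <;> simp
        have hja : a j = true := (haT i hai).1 j hjP
        have hjD : j ∈ D := (hmemD j).mpr (by rw [hja, hjb']; simp)
        exact ⟨j, (hmemE j i).mpr ⟨hjD, hiD, Or.inl hjP⟩⟩
  -- apply the graph lemma
  obtain ⟨m, v, hinj, hmem, hedge, hnf⟩ :=
    AndNotAux.exists_cycle a E.card D E le_rfl hEV hin hVne
  -- build the cycle data
  set C : CycleData n :=
    ⟨m, v, hinj, fun t => a (v t) == a (v (t + 1))⟩ with hC
  have hCvert : ∀ t, C.vert t = v t := fun t => rfl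
  have hCsign : ∀ t, C.sign t = (a (v t) == a (v (t + 1))) := fun t => rfl
  -- the loop property
  have hLoop : C.IsLoopOf (fun j i => j ∈ P i) (fun j i => j ∈ N i) := by
    intro t
    have he := hedge t
    rw [hmemE] at he
    obtain ⟨h1D, h2D, hor⟩ := he
    by_cases hc : a (v t) = a (v (t + 1))
    · have hs : C.sign t = true := by rw [hCsign]; exact beq_iff_eq.mpr hc
      rw [hs]
      simp only [if_true]
      rcases hor with h | h
      · exact h
      · exact absurd hc (hNcol _ _ h1D h2D h)
    · have hs : C.sign t = false := by
        rw [hCsign]; exact beq_eq_false_iff_ne.mpr hc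
      rw [hs]
      simp only [Bool.false_eq_true, if_false]
      rcases hor with h | h
      · exact absurd (hPcol _ _ h1D h2D h) hc
      · exact h
  -- positivity
  have hPos : C.IsPositive := by
    unfold CycleData.IsPositive
    have hcast : ((Finset.univ.filter fun t => C.sign t = false).card : ZMod 2) = 0 := by
      rw [Finset.card_filter]
      push_cast
      have hterm : ∀ t : Fin (m + 1),
          (if C.sign t = false then (1 : ZMod 2) else 0) =
            (if a (v t) then (1 : ZMod 2) else 0) + (if a (v (t + 1)) then (1 : ZMod 2) else 0) := by
        intro t
        rw [hCsign]
        cases hx : a (v t) <;> cases hy : a (v (t + 1)) <;> simp [hx, hy] <;> decide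
      rw [Finset.sum_congr rfl (fun t _ => hterm t)]
      rw [Finset.sum_add_distrib]
      have hshift : (∑ t : Fin (m + 1), if a (v (t + 1)) then (1 : ZMod 2) else 0) =
          (∑ t : Fin (m + 1), if a (v t) then (1 : ZMod 2) else 0) := by
        apply Fintype.sum_equiv (Equiv.addRight (1 : Fin (m + 1)))
        intro t
        rfl
      rw [hshift, ← two_mul]
      have : (2 : ZMod 2) = 0 := by decide
      rw [this, zero_mul]
    have hdvd : 2 ∣ (Finset.univ.filter fun t => C.sign t = false).card :=
      (ZMod.natCast_eq_zero_iff _ 2).mp hcast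
    omega
  -- strongness
  have hStrong : C.IsStrong (fun j i => j ∈ P i) (fun j i => j ∈ N i) := by
    rintro ⟨k, i, j, ⟨ti, hti⟩, ⟨tj, htj⟩, hpos, hneg, hnEi, hnEj⟩
    have hiD : i ∈ D := by rw [← hti]; exact hmem ti
    have hjD : j ∈ D := by rw [← htj]; exact hmem tj
    by_cases hkD : k ∈ D
    · -- inside D: use the abstract no-fork property
      have h1 : (k, v ti) ∈ E := by
        rw [hmemE]
        rw [hCvert] at hti
        exact ⟨hkD, by rw [hti]; exact hiD, by rw [hti]; exact Or.inl hpos⟩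
      have h4 : (k, v tj) ∈ E := by
        rw [hmemE]
        rw [hCvert] at htj
        exact ⟨hkD, by rw [htj]; exact hjD, by rw [htj]; exact Or.inr hneg⟩
      rw [hCvert] at hti htj
      have h2 : a k = a (v ti) := by rw [hti]; exact hPcol k i hkD hiD hpos
      have h5 : a k ≠ a (v tj) := by rw [htj]; exact hNcol k j hkD hjD hneg
      have h3 : ∀ t, ¬ (v t = k ∧ v (t + 1) = v ti) := by
        rintro t ⟨hta, htb⟩
        apply hnEi
        refine ⟨t, hta, ?_, ?_⟩
        · show v (t + 1) = i
          rw [htb, hti]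
        · show (a (v t) == a (v (t + 1))) = true
          rw [hta, htb, hti]
          exact beq_iff_eq.mpr (by rw [h2, hti])
      have h6 : ∀ t, ¬ (v t = k ∧ v (t + 1) = v tj) := by
        rintro t ⟨hta, htb⟩
        apply hnEj
        refine ⟨t, hta, ?_, ?_⟩
        · show v (t + 1) = j
          rw [htb, htj]
        · show (a (v t) == a (v (t + 1))) = false
          rw [hta, htb, htj]
          exact beq_eq_false_iff_ne.mpr (by rw [← htj]; exact h5)
      exact hnf k ti tj h1 h2 h3 h4 h5 h6
    · exact hkill k i j hiD hjD hkD hpos hneg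
  -- conclude
  obtain ⟨v₀, hv₀J, t, ht⟩ := hJ C hLoop hPos hStrong
  have hv₀D : v₀ ∈ D := by rw [← ht]; exact hmem t
  exact ((hmemD v₀).mp hv₀D) (hagree v₀ hv₀J)
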